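/- With the setup of the discrepancy function ψ(β) = ‖A x_β − b‖² − z (x_β minimizing ‖Ax − b‖² + β^{-1}‖Ψx‖², ker(A) ∩ ker(Ψ) = {0}), ψ has a unique positive root provided ‖(I_M − A A†) b‖² < z < ‖(I_M − A K (A K)†) b‖², where the columns of K form an orthonormal basis of ker(Ψ) and † denotes the Moore–Penrose pseudoinverse. -/

import Mathlib

open Matrix

/-- The `i`-th largest eigenvalue (1-based, descending, with multiplicity) of a
real symmetric matrix; junk value `0` if the matrix is not Hermitian or `i` is out of range. -/
noncomputable def eigH {n : ℕ} (A : Matrix (Fin n) (Fin n) ℝ) (i : ℕ) : ℝ :=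
  if h : A.IsHermitian then
    (List.insertionSort (· ≥ ·) (List.ofFn h.eigenvalues)).getD (i - 1) 0
  else 0

/-- `B` is the Moore–Penrose pseudoinverse of `A` (four Penrose conditions). -/
def IsMoorePenrose {m n : ℕ} (A : Matrix (Fin m) (Fin n) ℝ) (B : Matrix (Fin n) (Fin m) ℝ) : Prop :=
  A * B * A = A ∧ B * A * B = B ∧ (A * B)ᵀ = A * B ∧ (B * A)ᵀ = B * A

namespace Stmt13Aux

lemma dot_mulVec_transfer {m n : ℕ} (u : Fin m → ℝ) (v : Fin n → ℝ)
    (A : Matrix (Fin m) (Fin n) ℝ) : u ⬝ᵥ (A *ᵥ v) = (Aᵀ *ᵥ u) ⬝ᵥ v := by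
  rw [Matrix.dotProduct_mulVec, Matrix.mulVec_transpose]

lemma dot_self_nonneg {n : ℕ} (v : Fin n → ℝ) : 0 ≤ v ⬝ᵥ v :=
  Finset.sum_nonneg fun _ _ => mul_self_nonneg _

lemma dot_self_eq_zero' {n : ℕ} {v : Fin n → ℝ} (h : v ⬝ᵥ v = 0) : v = 0 := by
  funext i
  by_contra hi
  have h1 : 0 < v i * v i := mul_self_pos.mpr hi
  have := Finset.sum_eq_zero_iff_of_nonneg (fun j (_ : j ∈ Finset.univ) =>
    mul_self_nonneg (v j)) |>.mp h i (Finset.mem_univ i)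
  exact absurd this (ne_of_gt h1)

lemma dot_sub_comm {n : ℕ} (u v : Fin n → ℝ) : (u - v) ⬝ᵥ (u - v) = (v - u) ⬝ᵥ (v - u) := by
  simp only [dotProduct_sub, sub_dotProduct]
  ring

lemma linear_coeff_zero {q L : ℝ} (hq : 0 ≤ q) (h : ∀ t : ℝ, 0 ≤ q * t ^ 2 + L * t) :
    L = 0 := by
  rcases eq_or_lt_of_le hq with hq0 | hq0
  · have h1 := h 1; have h2 := h (-1); nlinarith
  · have := h (-L / (2 * q))
    have heq : q * (-L / (2 * q)) ^ 2 + L * (-L / (2 * q)) = -(L ^ 2) / (4 * q) := by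
      field_simp; ring
    rw [heq] at this
    have hL : L ^ 2 ≤ 0 := by
      have h4 : 0 < 4 * q := by linarith
      rw [div_nonneg_iff] at this
      rcases this with ⟨h1, _⟩ | ⟨_, h2⟩ <;> linarith
    nlinarith [sq_nonneg L]

lemma expand_quad {m n : ℕ} (Amat : Matrix (Fin m) (Fin n) ℝ) (p : Fin m → ℝ)
    (x v : Fin n → ℝ) (t : ℝ) :
    (Amat *ᵥ (x + t • v) - p) ⬝ᵥ (Amat *ᵥ (x + t • v) - p)
      = (Amat *ᵥ x - p) ⬝ᵥ (Amat *ᵥ x - p)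
        + (2 * (v ⬝ᵥ (Amatᵀ *ᵥ (Amat *ᵥ x - p)))) * t
        + ((Amat *ᵥ v) ⬝ᵥ (Amat *ᵥ v)) * t ^ 2 := by
  have ht : v ⬝ᵥ (Amatᵀ *ᵥ (Amat *ᵥ x - p)) = (Amat *ᵥ v) ⬝ᵥ (Amat *ᵥ x - p) := by
    rw [dot_mulVec_transfer v _ Amatᵀ, Matrix.transpose_transpose, dotProduct_comm]
  rw [Matrix.mulVec_add, Matrix.mulVec_smul, ht]
  set p1 := Amat *ᵥ x - p
  set w := Amat *ᵥ v
  have : Amat *ᵥ x + t • w - p = p1 + t • w := by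
    simp only [p1]; abel
  rw [this]
  simp only [dotProduct_add, add_dotProduct, smul_dotProduct, dotProduct_smul, smul_eq_mul,
    dotProduct_comm w p1]
  ring

/-- The normal equation from minimality. -/
lemma normal_eq {M N K : ℕ} (A : Matrix (Fin M) (Fin N) ℝ) (Ψ : Matrix (Fin K) (Fin N) ℝ)
    (b : Fin M → ℝ) {β : ℝ} (hβ : 0 < β) (x : Fin N → ℝ)
    (hx : ∀ y : Fin N → ℝ,
      (A *ᵥ x - b) ⬝ᵥ (A *ᵥ x - b) + β⁻¹ * ((Ψ *ᵥ x) ⬝ᵥ (Ψ *ᵥ x)) ≤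
        (A *ᵥ y - b) ⬝ᵥ (A *ᵥ y - b) + β⁻¹ * ((Ψ *ᵥ y) ⬝ᵥ (Ψ *ᵥ y))) :
    Aᵀ *ᵥ (A *ᵥ x) + β⁻¹ • (Ψᵀ *ᵥ (Ψ *ᵥ x)) = Aᵀ *ᵥ b := by
  have hβi : 0 < β⁻¹ := inv_pos.mpr hβ
  set r : Fin N → ℝ := Aᵀ *ᵥ (A *ᵥ x) - Aᵀ *ᵥ b + β⁻¹ • (Ψᵀ *ᵥ (Ψ *ᵥ x)) with hr
  have hdot : r ⬝ᵥ (Aᵀ *ᵥ (A *ᵥ x - b)) + β⁻¹ * (r ⬝ᵥ (Ψᵀ *ᵥ (Ψ *ᵥ x))) = r ⬝ᵥ r := by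
    rw [Matrix.mulVec_sub]
    simp only [hr, dotProduct_add, dotProduct_sub, dotProduct_smul, add_dotProduct,
      sub_dotProduct, smul_dotProduct, smul_eq_mul]
    try ring
  have key : ∀ t : ℝ,
      0 ≤ ((A *ᵥ r) ⬝ᵥ (A *ᵥ r) + β⁻¹ * ((Ψ *ᵥ r) ⬝ᵥ (Ψ *ᵥ r))) * t ^ 2
          + (2 * (r ⬝ᵥ r)) * t := by
    intro t
    have h := hx (x + t • r)
    rw [expand_quad A b x r t] at h
    have hΨ : (Ψ *ᵥ (x + t • r)) ⬝ᵥ (Ψ *ᵥ (x + t • r))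
        = (Ψ *ᵥ x) ⬝ᵥ (Ψ *ᵥ x) + (2 * (r ⬝ᵥ (Ψᵀ *ᵥ (Ψ *ᵥ x)))) * t
          + ((Ψ *ᵥ r) ⬝ᵥ (Ψ *ᵥ r)) * t ^ 2 := by
      have := expand_quad Ψ 0 x r t
      simpa using this
    rw [hΨ] at h
    rw [← hdot]
    ring_nf at h ⊢
    linarith [h]
  have hq : 0 ≤ (A *ᵥ r) ⬝ᵥ (A *ᵥ r) + β⁻¹ * ((Ψ *ᵥ r) ⬝ᵥ (Ψ *ᵥ r)) := by
    have h1 := dot_self_nonneg (A *ᵥ r)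
    have h2 := dot_self_nonneg (Ψ *ᵥ r)
    positivity
  have hL := linear_coeff_zero hq key
  have hr0 : r ⬝ᵥ r = 0 := by linarith
  have h0 : Aᵀ *ᵥ (A *ᵥ x) - Aᵀ *ᵥ b + β⁻¹ • (Ψᵀ *ᵥ (Ψ *ᵥ x)) = 0 :=
    hr ▸ dot_self_eq_zero' hr0
  rw [sub_add_eq_add_sub, sub_eq_zero] at h0
  exact h0

/-- least squares from orthogonality of residual -/
lemma ls_of_orth {m n : ℕ} (A : Matrix (Fin m) (Fin n) ℝ) (b : Fin m → ℝ) (x : Fin n → ℝ)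
    (horth : Aᵀ *ᵥ (A *ᵥ x - b) = 0) (y : Fin n → ℝ) :
    (A *ᵥ x - b) ⬝ᵥ (A *ᵥ x - b) ≤ (A *ᵥ y - b) ⬝ᵥ (A *ᵥ y - b) := by
  have hdecomp : A *ᵥ y - b = A *ᵥ (y - x) + (A *ᵥ x - b) := by
    rw [Matrix.mulVec_sub]; abel
  have hcross : (A *ᵥ x - b) ⬝ᵥ (A *ᵥ (y - x)) = 0 := by
    rw [dot_mulVec_transfer, horth, zero_dotProduct]
  have hcross' : (A *ᵥ (y - x)) ⬝ᵥ (A *ᵥ x - b) = 0 := by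
    rw [dotProduct_comm]; exact hcross
  rw [hdecomp]
  simp only [dotProduct_add, add_dotProduct, hcross, hcross']
  have h0 : 0 ≤ (A *ᵥ (y - x)) ⬝ᵥ (A *ᵥ (y - x)) := dot_self_nonneg _
  linarith

lemma mp_At_mul {m n : ℕ} (A : Matrix (Fin m) (Fin n) ℝ) (B : Matrix (Fin n) (Fin m) ℝ)
    (h1 : A * B * A = A) (h3 : (A * B)ᵀ = A * B) : Aᵀ * (A * B) = Aᵀ := by
  calc Aᵀ * (A * B) = Aᵀ * (A * B)ᵀ := by rw [h3]
    _ = (A * B * A)ᵀ := by simp [Matrix.transpose_mul, Matrix.mul_assoc]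
    _ = Aᵀ := by rw [h1]

lemma mp_orth {m n : ℕ} (A : Matrix (Fin m) (Fin n) ℝ) (B : Matrix (Fin n) (Fin m) ℝ)
    (h1 : A * B * A = A) (h3 : (A * B)ᵀ = A * B) (b : Fin m → ℝ) :
    Aᵀ *ᵥ (A *ᵥ (B *ᵥ b) - b) = 0 := by
  rw [Matrix.mulVec_sub, Matrix.mulVec_mulVec, Matrix.mulVec_mulVec, Matrix.mul_assoc,
    mp_At_mul A B h1 h3, sub_self]

lemma norm_E_sq {n : ℕ} (v : Fin n → ℝ) :
    ‖(WithLp.equiv 2 (Fin n → ℝ)).symm v‖ ^ 2 = v ⬝ᵥ v := by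
  rw [EuclideanSpace.norm_eq, Real.sq_sqrt (Finset.sum_nonneg fun _ _ => sq_nonneg _)]
  simp [dotProduct, sq]

/-- Cauchy-Schwarz style bound : `‖A w‖² ≤ (∑ A²) ‖w‖²` -/
lemma mulVec_sq_bound {m n : ℕ} (A : Matrix (Fin m) (Fin n) ℝ) (w : Fin n → ℝ) :
    (A *ᵥ w) ⬝ᵥ (A *ᵥ w) ≤ (∑ i, ∑ j, (A i j) ^ 2) * (w ⬝ᵥ w) := by
  have hrow : ∀ i, ((A *ᵥ w) i) ^ 2 ≤ ((A i) ⬝ᵥ (A i)) * (w ⬝ᵥ w) := by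
    intro i
    set X := (WithLp.equiv 2 (Fin n → ℝ)).symm (A i)
    set Y := (WithLp.equiv 2 (Fin n → ℝ)).symm w
    have habs : |(A *ᵥ w) i| ≤ ‖X‖ * ‖Y‖ := by
      have hinner : (inner ℝ X Y : ℝ) = (A *ᵥ w) i := by
        simp [X, Y, PiLp.inner_apply, Matrix.mulVec, dotProduct, RCLike.inner_apply, mul_comm]
      rw [← hinner]
      exact abs_real_inner_le_norm X Y
    calc ((A *ᵥ w) i) ^ 2 = |(A *ᵥ w) i| ^ 2 := (sq_abs _).symm
      _ ≤ (‖X‖ * ‖Y‖) ^ 2 := pow_le_pow_left₀ (abs_nonneg _) habs 2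
      _ = ‖X‖ ^ 2 * ‖Y‖ ^ 2 := by ring
      _ = ((A i) ⬝ᵥ (A i)) * (w ⬝ᵥ w) := by rw [norm_E_sq, norm_E_sq]
  calc (A *ᵥ w) ⬝ᵥ (A *ᵥ w) = ∑ i, ((A *ᵥ w) i) ^ 2 := by
        simp [dotProduct, sq]
    _ ≤ ∑ i, ((A i) ⬝ᵥ (A i)) * (w ⬝ᵥ w) := Finset.sum_le_sum fun i _ => hrow i
    _ = (∑ i, ∑ j, (A i j) ^ 2) * (w ⬝ᵥ w) := by
        rw [Finset.sum_mul]
        congr 1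
        funext i
        congr 1
        simp [dotProduct, sq]

lemma quad_lower_bound {n : ℕ} (B : Matrix (Fin n) (Fin n) ℝ)
    (hB : ∀ v : Fin n → ℝ, v ≠ 0 → 0 < v ⬝ᵥ (B *ᵥ v)) :
    ∃ c : ℝ, 0 < c ∧ ∀ v : Fin n → ℝ, c * (v ⬝ᵥ v) ≤ v ⬝ᵥ (B *ᵥ v) := by
  rcases Nat.eq_zero_or_pos n with hn | hn
  · subst hn
    refine ⟨1, one_pos, fun v => ?_⟩
    simp [dotProduct]
  · set E := EuclideanSpace ℝ (Fin n)
    set eq := WithLp.equiv 2 (Fin n → ℝ)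
    set f : E → ℝ := fun v => (eq v) ⬝ᵥ (B *ᵥ (eq v)) with hf
    have hcont : Continuous f := by
      have h1 : Continuous fun v : Fin n → ℝ => v ⬝ᵥ (B *ᵥ v) := by
        simp only [Matrix.mulVec, dotProduct]
        exact continuous_finset_sum _ fun i _ => (continuous_apply i).mul
          (continuous_finset_sum _ fun j _ => continuous_const.mul (continuous_apply j))
      exact h1.comp (PiLp.continuous_ofLp 2 (fun _ : Fin n => ℝ))
    have hne : ((Metric.sphere (0 : E) 1) : Set E).Nonempty := by
      refine ⟨EuclideanSpace.single ⟨0, hn⟩ 1, ?_⟩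
      rw [Metric.mem_sphere, dist_zero_right, EuclideanSpace.norm_single]; norm_num
    obtain ⟨v0, hv0mem, hv0min⟩ := (isCompact_sphere (0 : E) 1).exists_isMinOn hne
      hcont.continuousOn
    have hv0norm : ‖v0‖ = 1 := by simpa using hv0mem
    have hv0ne : eq v0 ≠ 0 := by
      intro h
      have : v0 = 0 := by
        apply (WithLp.equiv 2 (Fin n → ℝ)).injective
        rw [h]; rfl
      rw [this] at hv0norm; simp at hv0norm
    have hc : 0 < f v0 := hB (eq v0) hv0ne
    refine ⟨f v0, hc, fun v => ?_⟩
    by_cases hv : v = 0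
    · simp [hv]
    · set V : E := eq.symm v
      have hVnorm : ‖V‖ ^ 2 = v ⬝ᵥ v := by
        have hVi : ∀ i : Fin n, V i = v i := fun _ => rfl
        rw [EuclideanSpace.norm_eq, Real.sq_sqrt (Finset.sum_nonneg fun _ _ => sq_nonneg _)]
        simp only [Real.norm_eq_abs, sq_abs, hVi, dotProduct, sq]
        exact Finset.sum_congr rfl fun i _ => abs_mul_abs_self _
      have hVne : V ≠ 0 := by
        intro h; apply hv
        have := congrArg eq h; simpa [V, eq] using this
      have hVpos : 0 < ‖V‖ := norm_pos_iff.mpr hVne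
      set u : E := ‖V‖⁻¹ • V
      have humem : u ∈ Metric.sphere (0 : E) 1 := by
        simp [u, norm_smul, abs_of_pos (inv_pos.mpr hVpos), inv_mul_cancel₀ (ne_of_gt hVpos)]
      have hmin := hv0min humem
      have hscale : f u = (‖V‖⁻¹) ^ 2 * f V := by
        simp only [hf, u]
        have h1 : eq (‖V‖⁻¹ • V) = ‖V‖⁻¹ • (eq V) := rfl
        rw [h1, Matrix.mulVec_smul, smul_dotProduct, dotProduct_smul, smul_eq_mul, smul_eq_mul]
        ring
      have hfV : f V = v ⬝ᵥ (B *ᵥ v) := by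
        simp only [hf]
        congr 1
      have hle : f v0 ≤ (‖V‖⁻¹) ^ 2 * f V := by
        rw [← hscale]; exact hmin
      have h2 : f v0 * ‖V‖ ^ 2 ≤ f V := by
        have hV2 : 0 < ‖V‖ ^ 2 := by positivity
        have hinv : ‖V‖⁻¹ ^ 2 * ‖V‖ ^ 2 = 1 := by field_simp
        have h3 := mul_le_mul_of_nonneg_right hle (le_of_lt hV2)
        have h4 : ‖V‖⁻¹ ^ 2 * f V * ‖V‖ ^ 2 = f V := by
          rw [mul_comm (‖V‖⁻¹ ^ 2) (f V), mul_assoc, hinv, mul_one]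
        linarith
      rw [hVnorm] at h2
      rw [← hfV]
      linarith

end Stmt13Aux
set_option maxHeartbeats 2000000 in
/-- The discrepancy function ψ has a unique positive root when
‖(I − AA†)b‖² < z < ‖(I − AK(AK)†)b‖². -/
theorem stmt_13 (M N K P : ℕ) (A : Matrix (Fin M) (Fin N) ℝ) (Ψ : Matrix (Fin K) (Fin N) ℝ)
    (b : Fin M → ℝ) (z : ℝ)
    (hker : ∀ x : Fin N → ℝ, A.mulVec x = 0 → Ψ.mulVec x = 0 → x = 0)
    (x_ : ℝ → (Fin N → ℝ))
    (hmin : ∀ β : ℝ, 0 < β → ∀ y : Fin N → ℝ,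
      (A.mulVec (x_ β) - b) ⬝ᵥ (A.mulVec (x_ β) - b) +
          β⁻¹ * (Ψ.mulVec (x_ β) ⬝ᵥ Ψ.mulVec (x_ β)) ≤
        (A.mulVec y - b) ⬝ᵥ (A.mulVec y - b) + β⁻¹ * (Ψ.mulVec y ⬝ᵥ Ψ.mulVec y))
    (Kmat : Matrix (Fin N) (Fin P) ℝ) (hK1 : Kmatᵀ * Kmat = 1)
    (hK2 : LinearMap.range Kmat.mulVecLin = LinearMap.ker Ψ.mulVecLin)
    (pA : Matrix (Fin N) (Fin M) ℝ) (hpA : IsMoorePenrose A pA)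
    (pAK : Matrix (Fin P) (Fin M) ℝ) (hpAK : IsMoorePenrose (A * Kmat) pAK)
    (hz1 : ((1 - A * pA).mulVec b) ⬝ᵥ ((1 - A * pA).mulVec b) < z)
    (hz2 : z < ((1 - A * Kmat * pAK).mulVec b) ⬝ᵥ ((1 - A * Kmat * pAK).mulVec b)) :
    ∃! β : ℝ, 0 < β ∧
      (A.mulVec (x_ β) - b) ⬝ᵥ (A.mulVec (x_ β) - b) - z = 0 := by
  classical
  obtain ⟨hA1, hA2, hA3, hA4⟩ := hpA
  obtain ⟨hB1, hB2, hB3, hB4⟩ := hpAK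
  set m1 : ℝ := ((1 - A * pA) *ᵥ b) ⬝ᵥ ((1 - A * pA) *ᵥ b) with hm1
  set m2 : ℝ := ((1 - A * Kmat * pAK) *ᵥ b) ⬝ᵥ ((1 - A * Kmat * pAK) *ᵥ b) with hm2
  have hm1nn : 0 ≤ m1 := Stmt13Aux.dot_self_nonneg _
  have hz0 : 0 < z := lt_of_le_of_lt hm1nn hz1
  have hm2pos : 0 < m2 := lt_trans hz0 hz2
  have hm1eq : m1 = (A *ᵥ (pA *ᵥ b) - b) ⬝ᵥ (A *ᵥ (pA *ᵥ b) - b) := by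
    rw [hm1, Matrix.sub_mulVec, Matrix.one_mulVec, Stmt13Aux.dot_sub_comm,
      Matrix.mulVec_mulVec]
  have hm2eq : m2 = ((A * Kmat) *ᵥ (pAK *ᵥ b) - b) ⬝ᵥ ((A * Kmat) *ᵥ (pAK *ᵥ b) - b) := by
    rw [hm2, Matrix.sub_mulVec, Matrix.one_mulVec, Stmt13Aux.dot_sub_comm,
      Matrix.mulVec_mulVec]
  have hlsA : ∀ y, m1 ≤ (A *ᵥ y - b) ⬝ᵥ (A *ᵥ y - b) := by
    intro y
    rw [hm1eq]
    exact Stmt13Aux.ls_of_orth A b (pA *ᵥ b) (Stmt13Aux.mp_orth A pA hA1 hA3 b) y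
  have hlsAK : ∀ w : Fin P → ℝ, m2 ≤ ((A * Kmat) *ᵥ w - b) ⬝ᵥ ((A * Kmat) *ᵥ w - b) := by
    intro w
    rw [hm2eq]
    exact Stmt13Aux.ls_of_orth (A * Kmat) b (pAK *ᵥ b)
      (Stmt13Aux.mp_orth (A * Kmat) pAK hB1 hB3 b) w
  have hΨK : ∀ w : Fin P → ℝ, Ψ *ᵥ (Kmat *ᵥ w) = 0 := by
    intro w
    have hmem : Kmat *ᵥ w ∈ LinearMap.range Kmat.mulVecLin := ⟨w, rfl⟩
    rw [hK2] at hmem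
    simpa [Matrix.mulVecLin] using hmem
  have hNE : ∀ β : ℝ, 0 < β →
      Aᵀ *ᵥ (A *ᵥ (x_ β)) + β⁻¹ • (Ψᵀ *ᵥ (Ψ *ᵥ (x_ β))) = Aᵀ *ᵥ b :=
    fun β hβ => Stmt13Aux.normal_eq A Ψ b hβ (x_ β) (hmin β hβ)
  -- ## Uniqueness
  have huniq : ∀ β1 β2 : ℝ, 0 < β1 → 0 < β2 →
      (A *ᵥ (x_ β1) - b) ⬝ᵥ (A *ᵥ (x_ β1) - b) = z →
      (A *ᵥ (x_ β2) - b) ⬝ᵥ (A *ᵥ (x_ β2) - b) = z → β1 = β2 := by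
    intro β1 β2 h1 h2 hr1 hr2
    by_contra hne
    have hi1 : 0 < β1⁻¹ := inv_pos.mpr h1
    have hi2 : 0 < β2⁻¹ := inv_pos.mpr h2
    have ha := hmin β1 h1 (x_ β2)
    have hb := hmin β2 h2 (x_ β1)
    rw [hr1, hr2] at ha hb
    have hs12 : (Ψ *ᵥ (x_ β1)) ⬝ᵥ (Ψ *ᵥ (x_ β1)) = (Ψ *ᵥ (x_ β2)) ⬝ᵥ (Ψ *ᵥ (x_ β2)) := by
      have hs1 : (Ψ *ᵥ (x_ β1)) ⬝ᵥ (Ψ *ᵥ (x_ β1)) ≤ (Ψ *ᵥ (x_ β2)) ⬝ᵥ (Ψ *ᵥ (x_ β2)) := by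
        nlinarith
      have hs2 : (Ψ *ᵥ (x_ β2)) ⬝ᵥ (Ψ *ᵥ (x_ β2)) ≤ (Ψ *ᵥ (x_ β1)) ⬝ᵥ (Ψ *ᵥ (x_ β1)) := by
        nlinarith
      linarith
    have hmin2' : ∀ y : Fin N → ℝ,
        (A *ᵥ (x_ β1) - b) ⬝ᵥ (A *ᵥ (x_ β1) - b)
          + β2⁻¹ * ((Ψ *ᵥ (x_ β1)) ⬝ᵥ (Ψ *ᵥ (x_ β1))) ≤
        (A *ᵥ y - b) ⬝ᵥ (A *ᵥ y - b) + β2⁻¹ * ((Ψ *ᵥ y) ⬝ᵥ (Ψ *ᵥ y)) := by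
      intro y
      have hy := hmin β2 h2 y
      rw [hr2] at hy
      rw [hr1, hs12]
      exact hy
    have hNE2' := Stmt13Aux.normal_eq A Ψ b h2 (x_ β1) hmin2'
    have hNE1 := hNE β1 h1
    have hcancel : β1⁻¹ • (Ψᵀ *ᵥ (Ψ *ᵥ (x_ β1))) = β2⁻¹ • (Ψᵀ *ᵥ (Ψ *ᵥ (x_ β1))) :=
      add_left_cancel (hNE1.trans hNE2'.symm)
    have hQ : Ψᵀ *ᵥ (Ψ *ᵥ (x_ β1)) = 0 := by
      have hdiff : (β1⁻¹ - β2⁻¹) • (Ψᵀ *ᵥ (Ψ *ᵥ (x_ β1))) = 0 := by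
        rw [sub_smul, hcancel, sub_self]
      rcases smul_eq_zero.mp hdiff with hcoef | hv
      · exact absurd (inv_injective (by linarith [sub_eq_zero.mp hcoef] :
          β1⁻¹ = β2⁻¹)) hne
      · exact hv
    have horth : Aᵀ *ᵥ (A *ᵥ (x_ β1) - b) = 0 := by
      rw [Matrix.mulVec_sub, sub_eq_zero]
      have := hNE1
      rw [hQ, smul_zero, add_zero] at this
      exact this
    have hcontra := Stmt13Aux.ls_of_orth A b (x_ β1) horth (pA *ᵥ b)
    rw [hr1, ← hm1eq] at hcontra
    linarith
  -- ## Existence : setup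
  set c0 : Fin N → ℝ := Aᵀ *ᵥ b with hc0
  have hMatVec : ∀ (β : ℝ) (x : Fin N → ℝ),
      (Aᵀ * A + β⁻¹ • (Ψᵀ * Ψ)) *ᵥ x = Aᵀ *ᵥ (A *ᵥ x) + β⁻¹ • (Ψᵀ *ᵥ (Ψ *ᵥ x)) := by
    intro β x
    rw [Matrix.add_mulVec, Matrix.smul_mulVec, Matrix.mulVec_mulVec, Matrix.mulVec_mulVec]
  have hdet : ∀ β : ℝ, 0 < β → (Aᵀ * A + β⁻¹ • (Ψᵀ * Ψ)).det ≠ 0 := by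
    intro β hβ hdet0
    obtain ⟨v, hvne, hv0⟩ := (Matrix.exists_mulVec_eq_zero_iff).mpr hdet0
    have h1 : v ⬝ᵥ ((Aᵀ * A + β⁻¹ • (Ψᵀ * Ψ)) *ᵥ v) = 0 := by rw [hv0, dotProduct_zero]
    rw [hMatVec, dotProduct_add, dotProduct_smul] at h1
    have e1 : v ⬝ᵥ (Aᵀ *ᵥ (A *ᵥ v)) = (A *ᵥ v) ⬝ᵥ (A *ᵥ v) := by
      rw [Stmt13Aux.dot_mulVec_transfer v _ Aᵀ, Matrix.transpose_transpose]
    have e2 : v ⬝ᵥ (Ψᵀ *ᵥ (Ψ *ᵥ v)) = (Ψ *ᵥ v) ⬝ᵥ (Ψ *ᵥ v) := by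
      rw [Stmt13Aux.dot_mulVec_transfer v _ Ψᵀ, Matrix.transpose_transpose]
    rw [e1, e2, smul_eq_mul] at h1
    have hinv : 0 < β⁻¹ := inv_pos.mpr hβ
    have n1 := Stmt13Aux.dot_self_nonneg (A *ᵥ v)
    have n2 := Stmt13Aux.dot_self_nonneg (Ψ *ᵥ v)
    have hp2 : 0 ≤ β⁻¹ * ((Ψ *ᵥ v) ⬝ᵥ (Ψ *ᵥ v)) := mul_nonneg hinv.le n2
    have hAv : (A *ᵥ v) ⬝ᵥ (A *ᵥ v) = 0 := by linarith
    have hprod : β⁻¹ * ((Ψ *ᵥ v) ⬝ᵥ (Ψ *ᵥ v)) = 0 := by linarith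
    have hΨv : (Ψ *ᵥ v) ⬝ᵥ (Ψ *ᵥ v) = 0 :=
      (mul_eq_zero.mp hprod).resolve_left (ne_of_gt hinv)
    exact hvne (hker v (Stmt13Aux.dot_self_eq_zero' hAv) (Stmt13Aux.dot_self_eq_zero' hΨv))
  have hxeq : ∀ β : ℝ, 0 < β → x_ β = (Aᵀ * A + β⁻¹ • (Ψᵀ * Ψ))⁻¹ *ᵥ c0 := by
    intro β hβ
    have hne : (Aᵀ * A + β⁻¹ • (Ψᵀ * Ψ)) *ᵥ (x_ β) = c0 := by
      rw [hMatVec]; exact hNE β hβ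
    rw [← hne, Matrix.mulVec_mulVec,
      Matrix.nonsing_inv_mul _ (isUnit_iff_ne_zero.mpr (hdet β hβ)), Matrix.one_mulVec]
  set F : ℝ → ℝ := fun β =>
    (A *ᵥ ((Aᵀ * A + β⁻¹ • (Ψᵀ * Ψ))⁻¹ *ᵥ c0) - b) ⬝ᵥ
      (A *ᵥ ((Aᵀ * A + β⁻¹ • (Ψᵀ * Ψ))⁻¹ *ᵥ c0) - b) with hF
  have hFf : ∀ β : ℝ, 0 < β → F β = (A *ᵥ (x_ β) - b) ⬝ᵥ (A *ᵥ (x_ β) - b) := by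
    intro β hβ
    rw [hF]
    simp only
    rw [← hxeq β hβ]
  have hFcont : ∀ β : ℝ, 0 < β → ContinuousAt F β := by
    intro β hβ
    have hG : Continuous fun Mm : Matrix (Fin N) (Fin N) ℝ =>
        (A *ᵥ (Mm *ᵥ c0) - b) ⬝ᵥ (A *ᵥ (Mm *ᵥ c0) - b) := by
      have h1 : Continuous fun Mm : Matrix (Fin N) (Fin N) ℝ => A *ᵥ (Mm *ᵥ c0) - b :=
        (continuous_const.matrix_mulVec (continuous_id.matrix_mulVec continuous_const)).sub
          continuous_const
      exact h1.dotProduct h1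
    have hMc : ContinuousAt (fun β : ℝ => Aᵀ * A + β⁻¹ • (Ψᵀ * Ψ)) β :=
      continuousAt_const.add ((continuousAt_inv₀ (ne_of_gt hβ)).smul continuousAt_const)
    have hinv : ContinuousAt Inv.inv (Aᵀ * A + β⁻¹ • (Ψᵀ * Ψ)) := by
      apply continuousAt_matrix_inv
      rw [Ring.inverse_eq_inv']
      exact continuousAt_inv₀ (hdet β hβ)
    have h2 : ContinuousAt (fun β : ℝ => (Aᵀ * A + β⁻¹ • (Ψᵀ * Ψ))⁻¹) β :=
      ContinuousAt.comp (g := Inv.inv)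
        (f := fun β : ℝ => Aᵀ * A + β⁻¹ • (Ψᵀ * Ψ)) hinv hMc
    exact ContinuousAt.comp (g := fun Mm : Matrix (Fin N) (Fin N) ℝ =>
      (A *ᵥ (Mm *ᵥ c0) - b) ⬝ᵥ (A *ᵥ (Mm *ᵥ c0) - b)) hG.continuousAt h2
  -- ## βhi
  set sPA : ℝ := (Ψ *ᵥ (pA *ᵥ b)) ⬝ᵥ (Ψ *ᵥ (pA *ᵥ b)) with hsPA
  have hsPAnn : 0 ≤ sPA := Stmt13Aux.dot_self_nonneg _
  set βhi : ℝ := (sPA + 1) / (z - m1) with hβhi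
  have hβhipos : 0 < βhi := div_pos (by linarith) (by linarith)
  have hfhi : (A *ᵥ (x_ βhi) - b) ⬝ᵥ (A *ᵥ (x_ βhi) - b) < z := by
    have h := hmin βhi hβhipos (pA *ᵥ b)
    have hsx : 0 ≤ βhi⁻¹ * ((Ψ *ᵥ (x_ βhi)) ⬝ᵥ (Ψ *ᵥ (x_ βhi))) :=
      mul_nonneg (le_of_lt (inv_pos.mpr hβhipos)) (Stmt13Aux.dot_self_nonneg _)
    have hival : βhi⁻¹ * sPA < z - m1 := by
      rw [hβhi, inv_div, div_mul_eq_mul_div, div_lt_iff₀ (by linarith : (0:ℝ) < sPA + 1)]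
      nlinarith
    rw [← hsPA, ← hm1eq] at h
    linarith [h]
  -- ## βlo
  have hBpos : ∀ v : Fin N → ℝ, v ≠ 0 → 0 < v ⬝ᵥ ((Ψᵀ * Ψ + Kmat * Kmatᵀ) *ᵥ v) := by
    intro v hv
    have hexp : v ⬝ᵥ ((Ψᵀ * Ψ + Kmat * Kmatᵀ) *ᵥ v)
        = (Ψ *ᵥ v) ⬝ᵥ (Ψ *ᵥ v) + (Kmatᵀ *ᵥ v) ⬝ᵥ (Kmatᵀ *ᵥ v) := by
      rw [Matrix.add_mulVec, dotProduct_add, ← Matrix.mulVec_mulVec, ← Matrix.mulVec_mulVec,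
        Stmt13Aux.dot_mulVec_transfer v _ Ψᵀ, Matrix.transpose_transpose,
        Stmt13Aux.dot_mulVec_transfer v _ Kmat]
    rw [hexp]
    rcases lt_or_ge 0 ((Ψ *ᵥ v) ⬝ᵥ (Ψ *ᵥ v) + (Kmatᵀ *ᵥ v) ⬝ᵥ (Kmatᵀ *ᵥ v)) with hpos | hle
    · exact hpos
    · exfalso
      have n1 := Stmt13Aux.dot_self_nonneg (Ψ *ᵥ v)
      have n2 := Stmt13Aux.dot_self_nonneg (Kmatᵀ *ᵥ v)
      have hΨv : Ψ *ᵥ v = 0 := Stmt13Aux.dot_self_eq_zero' (by linarith)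
      have hKv : Kmatᵀ *ᵥ v = 0 := Stmt13Aux.dot_self_eq_zero' (by linarith)
      have hmem : v ∈ LinearMap.ker Ψ.mulVecLin := by
        simp [Matrix.mulVecLin, hΨv]
      rw [← hK2] at hmem
      obtain ⟨w, hw⟩ := hmem
      have hwv : Kmat *ᵥ w = v := hw
      have hw0 : w = 0 := by
        have : Kmatᵀ *ᵥ (Kmat *ᵥ w) = 0 := by rw [hwv]; exact hKv
        rwa [Matrix.mulVec_mulVec, hK1, Matrix.one_mulVec] at this
      rw [hw0] at hwv
      simp at hwv
      exact hv hwv.symm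
  obtain ⟨c, hcpos, hcbound⟩ := Stmt13Aux.quad_lower_bound _ hBpos
  set a : ℝ := ∑ i, ∑ j, (A i j) ^ 2 with ha
  have hann : 0 ≤ a := Finset.sum_nonneg fun _ _ => Finset.sum_nonneg fun _ _ => sq_nonneg _
  set δ : ℝ := Real.sqrt m2 - Real.sqrt z with hδ
  have hδpos : 0 < δ := by
    rw [hδ, sub_pos]
    exact Real.sqrt_lt_sqrt (le_of_lt hz0) hz2
  set βlo : ℝ := min (βhi / 2) (c * δ ^ 2 / (a * m2 + 1)) with hβlo
  have hβlopos : 0 < βlo := by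
    apply lt_min (by linarith)
    apply div_pos (by positivity) (by nlinarith)
  have hβlolt : βlo < βhi := lt_of_le_of_lt (min_le_left _ _) (by linarith)
  have hkey : a * m2 * βlo < c * δ ^ 2 := by
    have h1 : βlo ≤ c * δ ^ 2 / (a * m2 + 1) := min_le_right _ _
    have h2 : a * m2 * βlo ≤ a * m2 * (c * δ ^ 2 / (a * m2 + 1)) :=
      mul_le_mul_of_nonneg_left h1 (by nlinarith)
    have h3 : a * m2 * (c * δ ^ 2 / (a * m2 + 1)) < c * δ ^ 2 := by
      rw [mul_div_assoc', div_lt_iff₀ (by nlinarith : (0:ℝ) < a * m2 + 1)]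
      nlinarith [mul_pos hcpos (by positivity : (0:ℝ) < δ ^ 2)]
    exact lt_of_le_of_lt h2 h3
  -- lower bound for f at βlo
  have hflo : z < (A *ᵥ (x_ βlo) - b) ⬝ᵥ (A *ᵥ (x_ βlo) - b) := by
    set x1 := x_ βlo with hx1
    have hq := hmin βlo hβlopos (Kmat *ᵥ (pAK *ᵥ b))
    have hΨq : Ψ *ᵥ (Kmat *ᵥ (pAK *ᵥ b)) = 0 := hΨK _
    have hAq : A *ᵥ (Kmat *ᵥ (pAK *ᵥ b)) = (A * Kmat) *ᵥ (pAK *ᵥ b) := by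
      rw [Matrix.mulVec_mulVec]
    rw [hΨq, hAq, zero_dotProduct, mul_zero, add_zero, ← hm2eq] at hq
    have hfnn : 0 ≤ (A *ᵥ x1 - b) ⬝ᵥ (A *ᵥ x1 - b) := Stmt13Aux.dot_self_nonneg _
    have hs : (Ψ *ᵥ x1) ⬝ᵥ (Ψ *ᵥ x1) ≤ βlo * m2 := by
      have h1 : βlo⁻¹ * ((Ψ *ᵥ x1) ⬝ᵥ (Ψ *ᵥ x1)) ≤ m2 := by linarith
      have h2 := mul_le_mul_of_nonneg_left h1 (le_of_lt hβlopos)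
      rwa [← mul_assoc, mul_inv_cancel₀ (ne_of_gt hβlopos), one_mul] at h2
    set u1 : Fin N → ℝ := Kmat *ᵥ (Kmatᵀ *ᵥ x1) with hu1
    set w1 : Fin N → ℝ := x1 - u1 with hw1
    have hKtw : Kmatᵀ *ᵥ w1 = 0 := by
      rw [hw1, Matrix.mulVec_sub, hu1, Matrix.mulVec_mulVec, Matrix.mulVec_mulVec,
        hK1, Matrix.one_mul, sub_self]
    have hΨw : Ψ *ᵥ w1 = Ψ *ᵥ x1 := by
      rw [hw1, Matrix.mulVec_sub, hu1, hΨK, sub_zero]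
    have hwBw : w1 ⬝ᵥ ((Ψᵀ * Ψ + Kmat * Kmatᵀ) *ᵥ w1) = (Ψ *ᵥ x1) ⬝ᵥ (Ψ *ᵥ x1) := by
      rw [Matrix.add_mulVec, dotProduct_add, ← Matrix.mulVec_mulVec, ← Matrix.mulVec_mulVec,
        Stmt13Aux.dot_mulVec_transfer w1 _ Ψᵀ, Matrix.transpose_transpose,
        Stmt13Aux.dot_mulVec_transfer w1 _ Kmat, hΨw, hKtw, dotProduct_zero, add_zero]
    have hcw : c * (w1 ⬝ᵥ w1) ≤ βlo * m2 := by
      have := hcbound w1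
      rw [hwBw] at this
      linarith
    have hAw : (A *ᵥ w1) ⬝ᵥ (A *ᵥ w1) < δ ^ 2 := by
      have hb1 := Stmt13Aux.mulVec_sq_bound A w1
      have hb2 : c * (a * (w1 ⬝ᵥ w1)) ≤ a * (βlo * m2) := by
        rw [mul_left_comm]
        exact mul_le_mul_of_nonneg_left hcw hann
      have hb3 : a * (βlo * m2) < c * δ ^ 2 := by
        rw [show a * (βlo * m2) = a * m2 * βlo from by ring]
        exact hkey
      have hb4 : c * ((A *ᵥ w1) ⬝ᵥ (A *ᵥ w1)) < c * δ ^ 2 :=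
        lt_of_le_of_lt (mul_le_mul_of_nonneg_left hb1 (le_of_lt hcpos))
          (lt_of_le_of_lt hb2 hb3)
      exact lt_of_mul_lt_mul_left hb4 (le_of_lt hcpos)
    have hAu : m2 ≤ (A *ᵥ u1 - b) ⬝ᵥ (A *ᵥ u1 - b) := by
      have := hlsAK (Kmatᵀ *ᵥ x1)
      rw [← Matrix.mulVec_mulVec] at this
      exact this
    set PE := (WithLp.equiv 2 (Fin M → ℝ)).symm (A *ᵥ x1 - b) with hPE
    set UE := (WithLp.equiv 2 (Fin M → ℝ)).symm (A *ᵥ u1 - b) with hUE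
    set WE := (WithLp.equiv 2 (Fin M → ℝ)).symm (A *ᵥ w1) with hWE
    have hPUW : PE = UE + WE := by
      rw [hPE, hUE, hWE]
      have : A *ᵥ x1 - b = (A *ᵥ u1 - b) + A *ᵥ w1 := by
        have hx1w : x1 = u1 + w1 := by rw [hw1]; abel
        rw [hx1w, Matrix.mulVec_add]
        abel
      rw [this]
      rfl
    have hU : Real.sqrt m2 ≤ ‖UE‖ := by
      have h1 : m2 ≤ ‖UE‖ ^ 2 := by rw [hUE, Stmt13Aux.norm_E_sq]; exact hAu
      calc Real.sqrt m2 ≤ Real.sqrt (‖UE‖ ^ 2) := Real.sqrt_le_sqrt h1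
        _ = ‖UE‖ := Real.sqrt_sq (norm_nonneg _)
    have hWlt : ‖WE‖ < δ := by
      have h1 : ‖WE‖ ^ 2 < δ ^ 2 := by rw [hWE, Stmt13Aux.norm_E_sq]; exact hAw
      exact lt_of_pow_lt_pow_left₀ 2 (le_of_lt hδpos) h1
    have hPlow : Real.sqrt z < ‖PE‖ := by
      have h2 : ‖UE‖ ≤ ‖PE‖ + ‖WE‖ := by
        have : UE = PE - WE := by rw [hPUW]; abel
        rw [this]
        exact norm_sub_le _ _
      have h3 : Real.sqrt m2 - δ = Real.sqrt z := by rw [hδ]; ring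
      linarith
    have h1 : Real.sqrt z ^ 2 < ‖PE‖ ^ 2 :=
      pow_lt_pow_left₀ hPlow (Real.sqrt_nonneg z) (by norm_num)
    rw [Real.sq_sqrt (le_of_lt hz0), hPE, Stmt13Aux.norm_E_sq] at h1
    exact h1
  -- ## IVT
  have hcontOn : ContinuousOn F (Set.Icc βlo βhi) := fun β hβ =>
    ((hFcont β (lt_of_lt_of_le hβlopos hβ.1)).continuousWithinAt)
  have hsub := intermediate_value_Icc' (le_of_lt hβlolt) hcontOn
  have hzmem : z ∈ Set.Icc (F βhi) (F βlo) := by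
    rw [hFf βhi hβhipos, hFf βlo hβlopos]
    exact ⟨le_of_lt hfhi, le_of_lt hflo⟩
  obtain ⟨βs, hβsmem, hβsval⟩ := hsub hzmem
  have hβspos : 0 < βs := lt_of_lt_of_le hβlopos hβsmem.1
  have hfs : (A *ᵥ (x_ βs) - b) ⬝ᵥ (A *ᵥ (x_ βs) - b) = z := by
    rw [← hFf βs hβspos]; exact hβsval
  refine ⟨βs, ⟨hβspos, by rw [hfs]; ring⟩, ?_⟩
  rintro β' ⟨hβ'pos, hβ'val⟩
  exact huniq β' βs hβ'pos hβspos (by linarith) hfs
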